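/- Let g : [0,∞) → ℂ be measurable and suppose that the function k ↦ g(|k|) is Lebesgue integrable on ℝ², where |k| denotes the Euclidean norm of k = (k₀,k₁). Then ∫_{ℝ²} g(|k|) · k₀/(−i k₀ + k₁) dk = (i/2) ∫_{ℝ²} g(|k|) dk and ∫_{ℝ²} g(|k|) · k₁/(−i k₀ + k₁) dk = (1/2) ∫_{ℝ²} g(|k|) dk. In particular ∫_{ℝ²} g(|k|)·(−i k₀)/(−i k₀ + k₁) dk = ∫_{ℝ²} g(|k|)·k₁/(−i k₀ + k₁) dk. -/

import Mathlib

open MeasureTheory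

/-- The Euclidean norm on `ℝ²` (realized as `ℝ × ℝ`). -/
noncomputable def euclNorm (k : ℝ × ℝ) : ℝ :=
  Real.sqrt (k.1 ^ 2 + k.2 ^ 2)

namespace RadialAux

/-- The chiral denominator `-i k₀ + k₁`. -/
noncomputable def D (k : ℝ × ℝ) : ℂ := -Complex.I * (k.1 : ℂ) + (k.2 : ℂ)

lemma D_re (k : ℝ × ℝ) : (D k).re = k.2 := by simp [D]
lemma D_im (k : ℝ × ℝ) : (D k).im = -k.1 := by simp [D]

lemma normD (k : ℝ × ℝ) : ‖D k‖ = euclNorm k := by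
  rw [Complex.norm_def, Complex.normSq_apply,
    D_re, D_im, euclNorm]
  ring_nf

lemma D_eq_zero {k : ℝ × ℝ} (h : D k = 0) : k = 0 := by
  have h1 : (D k).re = 0 := by rw [h]; simp
  have h2 : (D k).im = 0 := by rw [h]; simp
  rw [D_re] at h1
  rw [D_im] at h2
  have : k.1 = 0 := by linarith
  exact Prod.ext this h1

lemma abs_fst_le (k : ℝ × ℝ) : |k.1| ≤ euclNorm k := by
  rw [euclNorm, ← Real.sqrt_sq_eq_abs]
  exact Real.sqrt_le_sqrt (by nlinarith [sq_nonneg k.2])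

lemma abs_snd_le (k : ℝ × ℝ) : |k.2| ≤ euclNorm k := by
  rw [euclNorm, ← Real.sqrt_sq_eq_abs]
  exact Real.sqrt_le_sqrt (by nlinarith [sq_nonneg k.1])

lemma norm_phi_le (k : ℝ × ℝ) : ‖(-Complex.I * (k.1 : ℂ)) / D k‖ ≤ 1 := by
  rw [norm_div]
  apply div_le_one_of_le₀
  · rw [normD]
    calc ‖-Complex.I * (k.1 : ℂ)‖ = |k.1| := by
          rw [norm_mul, norm_neg, Complex.norm_I, one_mul, Complex.norm_real, Real.norm_eq_abs]
      _ ≤ euclNorm k := abs_fst_le k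
  · exact norm_nonneg _

lemma norm_psi_le (k : ℝ × ℝ) : ‖((k.2 : ℂ)) / D k‖ ≤ 1 := by
  rw [norm_div]
  apply div_le_one_of_le₀
  · rw [normD]
    calc ‖((k.2 : ℂ))‖ = |k.2| := by rw [Complex.norm_real, Real.norm_eq_abs]
      _ ≤ euclNorm k := abs_snd_le k
  · exact norm_nonneg _

/-- Rotation by 90 degrees as a measurable equivalence of `ℝ × ℝ`. -/
noncomputable def rot : ℝ × ℝ ≃ᵐ ℝ × ℝ :=
  MeasurableEquiv.prodComm.trans
    ((MeasurableEquiv.neg ℝ).prodCongr (MeasurableEquiv.refl ℝ))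

lemma rot_apply (k : ℝ × ℝ) : rot k = (-k.2, k.1) := rfl

lemma rot_measurePreserving :
    MeasurePreserving (rot : ℝ × ℝ → ℝ × ℝ) volume volume := by
  have h1 : MeasurePreserving (Prod.swap : ℝ × ℝ → ℝ × ℝ)
      ((volume : Measure ℝ).prod volume) ((volume : Measure ℝ).prod volume) :=
    Measure.measurePreserving_swap
  have h2 : MeasurePreserving (Prod.map (Neg.neg : ℝ → ℝ) (id : ℝ → ℝ))
      ((volume : Measure ℝ).prod volume) ((volume : Measure ℝ).prod volume) :=
    (Measure.measurePreserving_neg volume).prod (MeasurePreserving.id volume)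
  exact h2.comp h1

lemma euclNorm_rot (k : ℝ × ℝ) : euclNorm (rot k) = euclNorm k := by
  rw [rot_apply, euclNorm, euclNorm]
  ring_nf

lemma phi_rot (k : ℝ × ℝ) :
    (-Complex.I * ((rot k).1 : ℂ)) / D (rot k) = ((k.2 : ℂ)) / D k := by
  rw [rot_apply, D, D]
  push_cast
  rw [show -Complex.I * -(k.2 : ℂ) = Complex.I * (k.2 : ℂ) by ring]
  rw [show Complex.I * (k.2 : ℂ) + (k.1 : ℂ)
      = Complex.I * (-Complex.I * (k.1 : ℂ) + (k.2 : ℂ)) by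
    linear_combination (k.1 : ℂ) * Complex.I_sq]
  exact mul_div_mul_left _ _ Complex.I_ne_zero

end RadialAux

/-- Angular-average identities for radial weights against the chiral symbol `1/(−ik₀+k₁)`:
the averages of `k₀/(−ik₀+k₁)` and `k₁/(−ik₀+k₁)` are `i/2` and `1/2` respectively, and in
particular the integrals of `g(|k|)(−ik₀)/(−ik₀+k₁)` and `g(|k|)k₁/(−ik₀+k₁)` coincide. -/
theorem radial_angular_averages
    (g : ℝ → ℂ) (hg : Measurable g)
    (hint : Integrable (fun k : ℝ × ℝ => g (euclNorm k))) :
    (∫ k : ℝ × ℝ, g (euclNorm k) * ((k.1 : ℂ) / (-Complex.I * (k.1 : ℂ) + (k.2 : ℂ))) =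
        (Complex.I / 2) * ∫ k : ℝ × ℝ, g (euclNorm k)) ∧
    (∫ k : ℝ × ℝ, g (euclNorm k) * ((k.2 : ℂ) / (-Complex.I * (k.1 : ℂ) + (k.2 : ℂ))) =
        (1 / 2 : ℂ) * ∫ k : ℝ × ℝ, g (euclNorm k)) ∧
    (∫ k : ℝ × ℝ, g (euclNorm k) *
          ((-Complex.I * (k.1 : ℂ)) / (-Complex.I * (k.1 : ℂ) + (k.2 : ℂ))) =
        ∫ k : ℝ × ℝ, g (euclNorm k) * ((k.2 : ℂ) / (-Complex.I * (k.1 : ℂ) + (k.2 : ℂ)))) := by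
  open RadialAux in
  -- notation
  set r : ℝ × ℝ → ℂ := fun k => g (euclNorm k) with hr
  have hφm : Measurable fun k : ℝ × ℝ => (-Complex.I * (k.1 : ℂ)) / RadialAux.D k := by
    unfold RadialAux.D; fun_prop
  have hψm : Measurable fun k : ℝ × ℝ => ((k.2 : ℂ)) / RadialAux.D k := by
    unfold RadialAux.D; fun_prop
  -- integrability of both weighted integrands
  have hintφ : Integrable (fun k : ℝ × ℝ => r k * ((-Complex.I * (k.1 : ℂ)) / RadialAux.D k)) := by
    have := hint.bdd_mul hφm.aestronglyMeasurable (Filter.Eventually.of_forall RadialAux.norm_phi_le)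
    simpa [mul_comm] using this
  have hintψ : Integrable (fun k : ℝ × ℝ => r k * (((k.2 : ℂ)) / RadialAux.D k)) := by
    have := hint.bdd_mul hψm.aestronglyMeasurable (Filter.Eventually.of_forall RadialAux.norm_psi_le)
    simpa [mul_comm] using this
  -- the denominator is a.e. nonzero
  have hz : volume ({((0:ℝ),(0:ℝ))} : Set (ℝ × ℝ)) = 0 := measure_singleton _
  have hD0 : ∀ᵐ k : ℝ × ℝ, RadialAux.D k ≠ 0 := by
    rw [ae_iff]
    refine measure_mono_null ?_ hz
    intro k hk
    simp only [Set.mem_setOf_eq, not_not] at hk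
    have := RadialAux.D_eq_zero hk
    simpa [Prod.ext_iff] using this
  -- a.e. the two integrands sum to the radial weight
  have key : ∀ᵐ k : ℝ × ℝ,
      r k * ((-Complex.I * (k.1 : ℂ)) / RadialAux.D k)
        + r k * (((k.2 : ℂ)) / RadialAux.D k) = r k := by
    filter_upwards [hD0] with k hk
    rw [← mul_add, ← add_div]
    rw [show -Complex.I * (k.1 : ℂ) + (k.2 : ℂ) = RadialAux.D k from rfl, div_self hk, mul_one]
  have hsum :
      (∫ k : ℝ × ℝ, r k * ((-Complex.I * (k.1 : ℂ)) / RadialAux.D k))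
        + (∫ k : ℝ × ℝ, r k * (((k.2 : ℂ)) / RadialAux.D k))
        = ∫ k : ℝ × ℝ, r k := by
    rw [← integral_add hintφ hintψ, integral_congr_ae key]
  -- rotation invariance: the two integrals coincide
  have heq :
      (∫ k : ℝ × ℝ, r k * ((-Complex.I * (k.1 : ℂ)) / RadialAux.D k))
        = ∫ k : ℝ × ℝ, r k * (((k.2 : ℂ)) / RadialAux.D k) := by
    have h := RadialAux.rot_measurePreserving.integral_comp
      RadialAux.rot.measurableEmbedding
      (fun k : ℝ × ℝ => r k * ((-Complex.I * (k.1 : ℂ)) / RadialAux.D k))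
    rw [← h]
    congr 1
    funext k
    rw [hr]
    simp only
    rw [RadialAux.euclNorm_rot, RadialAux.phi_rot]
  -- conclude
  have hψval : (∫ k : ℝ × ℝ, r k * (((k.2 : ℂ)) / RadialAux.D k))
      = (1 / 2 : ℂ) * ∫ k : ℝ × ℝ, r k := by
    rw [heq] at hsum
    rw [← hsum]; ring
  have hφval : (∫ k : ℝ × ℝ, r k * ((-Complex.I * (k.1 : ℂ)) / RadialAux.D k))
      = (1 / 2 : ℂ) * ∫ k : ℝ × ℝ, r k := heq.trans hψval
  refine ⟨?_, hψval, heq⟩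
  · -- first identity: ∫ r k₁' ... ; note φ = -I * (k₀/D)
    have hmul : (∫ k : ℝ × ℝ, r k * ((-Complex.I * (k.1 : ℂ)) / RadialAux.D k))
        = -Complex.I * ∫ k : ℝ × ℝ, r k * ((k.1 : ℂ) / RadialAux.D k) := by
      rw [← integral_const_mul]
      congr 1
      funext k
      ring
    rw [hmul] at hφval
    set X := ∫ k : ℝ × ℝ, r k * ((k.1 : ℂ) / RadialAux.D k) with hX
    set S := ∫ k : ℝ × ℝ, r k with hS
    show X = Complex.I / 2 * S
    linear_combination Complex.I * hφval + X * Complex.I_sq
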